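/- A real (N,N) curve admitting a grid is a JNR spectral curve: if q(η, ζ) is a polynomial of bidegree (N, N) vanishing at all points (-1/conj(γ_i), γ_j) for i ≠ j, and the quantities λ_i² := conj(γ_i)^N · q(-1/conj(γ_i), γ_i) / ∏_{j≠i} |γ_i - γ_j|² are positive reals, and q agrees with the JNR polynomial p built from these λ_i and γ_i at the diagonal grid points (-1/conj(γ_i), γ_i), then q = p identically. -/

import Mathlib

open Finset Polynomial

lemma jnr_poly_agree {n : ℕ} (F G : Polynomial ℂ)
    (hF : F.natDegree ≤ n) (hG : G.natDegree ≤ n)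
    (x : Fin (n+1) → ℂ) (hx : Function.Injective x)
    (h : ∀ i, F.eval (x i) = G.eval (x i)) : F = G := by
  have h0 : F - G = 0 := by
    apply Polynomial.eq_zero_of_natDegree_lt_card_of_eval_eq_zero _ hx
    · intro i; simp [h i]
    · have := Polynomial.natDegree_sub_le F G
      simp only [Fintype.card_fin]
      omega
  linear_combination (norm := ring_nf) h0

/-- A real `(N,N)` curve admitting a grid is a JNR spectral curve: if a
bidegree-`(N,N)` polynomial `q` vanishes on the off-diagonal grid points, the
induced weights are positive, and `q` agrees with the JNR polynomial built from
those weights at the diagonal grid points, then `q` equals the JNR polynomial. -/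
theorem grid_curve_is_jnr (N : ℕ) (hN : 1 ≤ N)
    (γ : Fin (N+1) → ℂ) (hγ : Function.Injective γ) (hγ0 : ∀ i, γ i ≠ 0)
    (hα : Function.Injective (fun i => -1 / (starRingEnd ℂ) (γ i)))
    (c : Fin (N+1) → Fin (N+1) → ℂ)
    (q : ℂ → ℂ → ℂ)
    (hq : ∀ η ζ, q η ζ = ∑ a, ∑ b, c a b * η^(a : ℕ) * ζ^(b : ℕ))
    (hoffdiag : ∀ i j, i ≠ j → q (-1 / (starRingEnd ℂ) (γ i)) (γ j) = 0)
    (lam : Fin (N+1) → ℝ) (hlam : ∀ i, 0 < lam i)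
    (hlamdef : ∀ i, ((lam i : ℂ))^2 =
      ((starRingEnd ℂ) (γ i))^N * q (-1 / (starRingEnd ℂ) (γ i)) (γ i) /
        (∏ j ∈ Finset.univ.erase i, (‖γ i - γ j‖)^2 : ℝ))
    (p : ℂ → ℂ → ℂ)
    (hp : ∀ η ζ, p η ζ = ∑ i, (lam i : ℂ)^2 *
      ∏ j ∈ Finset.univ.erase i, (ζ - γ j) * (1 + η * (starRingEnd ℂ) (γ j)))
    (hdiag : ∀ i, q (-1 / (starRingEnd ℂ) (γ i)) (γ i) =
      p (-1 / (starRingEnd ℂ) (γ i)) (γ i)) :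
    ∀ η ζ, q η ζ = p η ζ := by
  classical
  set α : Fin (N+1) → ℂ := fun i => -1 / (starRingEnd ℂ) (γ i) with hαdef
  have hconj0 : ∀ i, (starRingEnd ℂ) (γ i) ≠ 0 := fun i => by
    simpa using hγ0 i
  have hαfac : ∀ i, (1 : ℂ) + α i * (starRingEnd ℂ) (γ i) = 0 := by
    intro i
    have := hconj0 i
    show (1:ℂ) + -1 / (starRingEnd ℂ) (γ i) * (starRingEnd ℂ) (γ i) = 0
    rw [div_mul_cancel₀ _ this]
    ring
  -- p vanishes at off-diagonal grid points
  have hpoff : ∀ i j, i ≠ j → p (α i) (γ j) = 0 := by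
    intro i j hij
    rw [hp]
    apply Finset.sum_eq_zero
    intro k _
    rcases eq_or_ne k i with rfl | hki
    · rw [Finset.prod_eq_zero (Finset.mem_erase.mpr ⟨hij.symm, Finset.mem_univ j⟩)
        (by rw [sub_self, zero_mul])]
      rw [mul_zero]
    · rw [Finset.prod_eq_zero (Finset.mem_erase.mpr ⟨Ne.symm hki, Finset.mem_univ i⟩)
        (by rw [hαfac i, mul_zero])]
      rw [mul_zero]
  have hgrid : ∀ i j, q (α i) (γ j) = p (α i) (γ j) := by
    intro i j
    rcases eq_or_ne i j with rfl | h
    · exact hdiag i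
    · rw [hoffdiag i j h, hpoff i j h]
  -- Step 1: for every i, q (α i) ζ = p (α i) ζ for all ζ
  have hstep1 : ∀ i ζ, q (α i) ζ = p (α i) ζ := by
    intro i ζ
    set F : Polynomial ℂ := ∑ b : Fin (N+1),
      Polynomial.C (∑ a : Fin (N+1), c a b * (α i)^(a:ℕ)) * Polynomial.X^(b:ℕ) with hF
    set G : Polynomial ℂ := ∑ k : Fin (N+1),
      Polynomial.C ((lam k : ℂ)^2 * ∏ j ∈ Finset.univ.erase k,
        (1 + α i * (starRingEnd ℂ) (γ j))) *
      ∏ j ∈ Finset.univ.erase k, (Polynomial.X - Polynomial.C (γ j)) with hG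
    have hFeval : ∀ z, F.eval z = q (α i) z := by
      intro z
      rw [hq, hF, Polynomial.eval_finset_sum, Finset.sum_comm]
      refine Finset.sum_congr rfl fun b _ => ?_
      rw [Polynomial.eval_mul, Polynomial.eval_C, Polynomial.eval_pow, Polynomial.eval_X,
        Finset.sum_mul]
    have hGeval : ∀ z, G.eval z = p (α i) z := by
      intro z
      rw [hp, hG, Polynomial.eval_finset_sum]
      refine Finset.sum_congr rfl fun k _ => ?_
      rw [Finset.prod_mul_distrib]
      simp [Polynomial.eval_prod]
      ring
    have hFdeg : F.natDegree ≤ N := by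
      apply Polynomial.natDegree_sum_le_of_forall_le
      intro b _
      refine le_trans (Polynomial.natDegree_C_mul_le _ _) ?_
      rw [Polynomial.natDegree_X_pow]
      exact Nat.lt_succ_iff.mp b.isLt
    have hGdeg : G.natDegree ≤ N := by
      apply Polynomial.natDegree_sum_le_of_forall_le
      intro k _
      refine le_trans (Polynomial.natDegree_C_mul_le _ _) ?_
      refine le_trans (Polynomial.natDegree_prod_le _ _) ?_
      calc ∑ j ∈ Finset.univ.erase k, (Polynomial.X - Polynomial.C (γ j)).natDegree
          ≤ ∑ _j ∈ Finset.univ.erase k, 1 := by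
            apply Finset.sum_le_sum
            intro j _
            rw [Polynomial.natDegree_X_sub_C]
        _ = N := by simp
    have hFG : F = G := by
      apply jnr_poly_agree F G hFdeg hGdeg γ hγ
      intro j
      rw [hFeval, hGeval]
      exact hgrid i j
    calc q (α i) ζ = F.eval ζ := (hFeval ζ).symm
      _ = G.eval ζ := by rw [hFG]
      _ = p (α i) ζ := hGeval ζ
  -- Step 2: for every ζ, the polynomials in η agree
  intro η ζ
  set F : Polynomial ℂ := ∑ a : Fin (N+1),
    Polynomial.C (∑ b : Fin (N+1), c a b * ζ^(b:ℕ)) * Polynomial.X^(a:ℕ) with hF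
  set G : Polynomial ℂ := ∑ k : Fin (N+1),
    Polynomial.C ((lam k : ℂ)^2 * ∏ j ∈ Finset.univ.erase k, (ζ - γ j)) *
    ∏ j ∈ Finset.univ.erase k,
      (Polynomial.C 1 + Polynomial.C ((starRingEnd ℂ) (γ j)) * Polynomial.X) with hG
  have hFeval : ∀ z, F.eval z = q z ζ := by
    intro z
    rw [hq, hF, Polynomial.eval_finset_sum]
    refine Finset.sum_congr rfl fun a _ => ?_
    rw [Polynomial.eval_mul, Polynomial.eval_C, Polynomial.eval_pow, Polynomial.eval_X,
      Finset.sum_mul]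
    exact Finset.sum_congr rfl fun b _ => by ring
  have hGeval : ∀ z, G.eval z = p z ζ := by
    intro z
    rw [hp, hG, Polynomial.eval_finset_sum]
    refine Finset.sum_congr rfl fun k _ => ?_
    rw [Finset.prod_mul_distrib]
    simp only [Polynomial.eval_mul, Polynomial.eval_C, Polynomial.eval_prod,
      Polynomial.eval_add, Polynomial.eval_one, Polynomial.eval_X]
    rw [mul_assoc]
    congr 1
    congr 1
    exact Finset.prod_congr rfl fun x _ => by ring
  have hFdeg : F.natDegree ≤ N := by
    apply Polynomial.natDegree_sum_le_of_forall_le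
    intro a _
    refine le_trans (Polynomial.natDegree_C_mul_le _ _) ?_
    rw [Polynomial.natDegree_X_pow]
    exact Nat.lt_succ_iff.mp a.isLt
  have hGdeg : G.natDegree ≤ N := by
    apply Polynomial.natDegree_sum_le_of_forall_le
    intro k _
    refine le_trans (Polynomial.natDegree_C_mul_le _ _) ?_
    refine le_trans (Polynomial.natDegree_prod_le _ _) ?_
    calc ∑ j ∈ Finset.univ.erase k,
          (Polynomial.C 1 + Polynomial.C ((starRingEnd ℂ) (γ j)) * Polynomial.X).natDegree
        ≤ ∑ _j ∈ Finset.univ.erase k, 1 := by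
          apply Finset.sum_le_sum
          intro j _
          refine le_trans (Polynomial.natDegree_add_le _ _) ?_
          simp only [Polynomial.natDegree_C, max_le_iff]
          exact ⟨Nat.zero_le 1,
            le_trans (Polynomial.natDegree_C_mul_le _ _) (le_of_eq Polynomial.natDegree_X)⟩
      _ = N := by simp [Finset.card_erase_of_mem]
  have hFG : F = G := by
    apply jnr_poly_agree F G hFdeg hGdeg α hα
    intro i
    rw [hFeval, hGeval]
    exact hstep1 i ζ
  calc q η ζ = F.eval η := (hFeval η).symm
    _ = G.eval η := by rw [hFG]
    _ = p η ζ := hGeval η
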